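/- Let n be even and m a positive integer. Every maximizer r = (r_1, ..., r_n) of d(r) = Σ_{i=1}^n r_i(2m − r_{i−1} − r_i) (with r_0 = r_{n+1} = 0) over the feasible region {r ∈ ℤ_{≥0}^n : r_i + r_{i+1} ≤ m for i = 0,...,n} satisfies r_i + r_{i+1} = m for every odd i with 1 ≤ i ≤ n−1. Consequently Σ_{i=1}^n r_i = nm/2, the odd Betti numbers β_1, β_3, ..., β_{n−1} all vanish, and Σ_{i=0}^n β_i = m, where β_i = m − r_i − r_{i+1}. -/

import Mathlib

open Finset

/-- Dimension of the variety of equal-dimension chain complexes with ranks `r`. -/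
def Dm (n m : ℕ) (r : ℕ → ℕ) : ℤ :=
  ∑ i ∈ Icc 1 n, (r i : ℤ) * (2 * (m : ℤ) - r (i - 1) - r i)

/-- Feasibility of the rank vector `r` (with conventions `r 0 = r (n+1) = 0`). -/
def feasm (n m : ℕ) (r : ℕ → ℕ) : Prop :=
  r 0 = 0 ∧ r (n + 1) = 0 ∧ ∀ i ≤ n, r i + r (i + 1) ≤ m

namespace Stmt15aux

/-- The `k`-th term of the dimension sum. -/
def Tm (m : ℕ) (r : ℕ → ℕ) (k : ℕ) : ℤ := (r k : ℤ) * (2 * (m:ℤ) - r (k-1) - r k)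

lemma Dm_ext (n m : ℕ) (r : ℕ → ℕ) (h : r (n+1) = 0) :
    Dm n m r = ∑ k ∈ Icc 1 (n+1), Tm m r k := by
  unfold Dm Tm
  rw [Finset.sum_Icc_succ_top (by omega : 1 ≤ n + 1)]
  simp [h]

lemma sum_shift (f : ℕ → ℤ) : ∀ N, ∑ i ∈ Icc 1 N, f i = ∑ i ∈ range N, f (i+1) := by
  intro N
  induction N with
  | zero => simp
  | succ N ih => rw [Finset.sum_Icc_succ_top (by omega), ih, Finset.sum_range_succ]

lemma move1 (n m : ℕ) (r : ℕ → ℕ) (hr0 : r 0 = 0) (hrn : r (n+1) = 0)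
    (hrle : ∀ i ≤ n, r i + r (i+1) ≤ m)
    (hmax : ∀ s, feasm n m s → Dm n m s ≤ Dm n m r)
    (j : ℕ) (hj1 : 1 ≤ j) (hjn : j ≤ n)
    (h1 : r (j-1) + r j + 1 ≤ m) (h2 : r j + r (j+1) + 1 ≤ m) : False := by
  classical
  set s : ℕ → ℕ := fun k => if k = j then r j + 1 else r k with hs
  have hsj : s j = r j + 1 := by simp [hs]
  have hsk : ∀ k, k ≠ j → s k = r k := fun k hk => by simp [hs, hk]
  have hfeas : feasm n m s := by
    refine ⟨by rw [hsk 0 (by omega)]; exact hr0, by rw [hsk (n+1) (by omega)]; exact hrn, ?_⟩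
    intro k hk
    rcases eq_or_ne k j with rfl | hkj
    · rw [hsj, hsk (k+1) (by omega)]
      omega
    · rcases eq_or_ne (k+1) j with he | hne
      · rw [hsk k hkj, he, hsj]
        have hj' : j - 1 = k := by omega
        rw [hj'] at h1
        omega
      · rw [hsk k hkj, hsk (k+1) hne]
        exact hrle k hk
  have hDle := hmax s hfeas
  rw [Dm_ext n m r hrn, Dm_ext n m s (by rw [hsk (n+1) (by omega)]; exact hrn)] at hDle
  have hout : ∀ k ∈ Icc 1 (n+1), k ∉ ({j, j+1} : Finset ℕ) → Tm m s k = Tm m r k := by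
    intro k hk hk'
    simp only [Finset.mem_Icc] at hk
    simp only [Finset.mem_insert, Finset.mem_singleton, not_or] at hk'
    unfold Tm
    rw [hsk k hk'.1, hsk (k-1) (by omega)]
  have hsub : ({j, j+1} : Finset ℕ) ⊆ Icc 1 (n+1) := by
    intro k hk
    simp only [Finset.mem_insert, Finset.mem_singleton] at hk
    simp only [Finset.mem_Icc]
    omega
  have hsplit : ∑ k ∈ Icc 1 (n+1), Tm m s k - ∑ k ∈ Icc 1 (n+1), Tm m r k
      = ∑ k ∈ ({j, j+1} : Finset ℕ), (Tm m s k - Tm m r k) := by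
    rw [← Finset.sum_sub_distrib]
    exact (Finset.sum_subset hsub (by
      intro k hk hk'
      rw [hout k hk hk', sub_self])).symm
  rw [Finset.sum_pair (by omega : j ≠ j + 1)] at hsplit
  have hT1 : Tm m s j - Tm m r j = 2*(m:ℤ) - r (j-1) - 2 * r j - 1 := by
    unfold Tm
    rw [hsj, hsk (j-1) (by omega)]
    push_cast
    ring
  have hT2 : Tm m s (j+1) - Tm m r (j+1) = -(r (j+1) : ℤ) := by
    unfold Tm
    have e : j + 1 - 1 = j := by omega
    rw [hsk (j+1) (by omega), e, hsj]
    push_cast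
    ring
  rw [hT1, hT2] at hsplit
  have h1' : ((r (j-1)):ℤ) + r j + 1 ≤ m := by exact_mod_cast h1
  have h2' : ((r j):ℤ) + r (j+1) + 1 ≤ m := by exact_mod_cast h2
  linarith [hDle, hsplit, h1', h2']

lemma move2 (n m : ℕ) (r : ℕ → ℕ) (hr0 : r 0 = 0) (hrn : r (n+1) = 0)
    (hrle : ∀ i ≤ n, r i + r (i+1) ≤ m)
    (hmax : ∀ s, feasm n m s → Dm n m s ≤ Dm n m r)
    (i : ℕ) (hi3 : 3 ≤ i) (hin : i + 1 ≤ n)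
    (heq1 : r (i-1) + r i = m)
    (heq2 : r (i-2) + r (i-1) = m)
    (hb : r i + r (i+1) + 1 ≤ m) :
    ∃ s : ℕ → ℕ, feasm n m s ∧ (∀ t, feasm n m t → Dm n m t ≤ Dm n m s) ∧
      s (i-2) + s (i-1) + 1 ≤ m := by
  classical
  set s : ℕ → ℕ := fun k => if k = i - 1 then m - (r i + 1) else if k = i then r i + 1 else r k
    with hs
  have hsi1 : s (i-1) = m - (r i + 1) := by simp [hs]
  have hsi : s i = r i + 1 := by
    simp only [hs]
    rw [if_neg (by omega)]
    simp
  have hsk : ∀ k, k ≠ i - 1 → k ≠ i → s k = r k := by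
    intro k h1 h2; simp only [hs]; rw [if_neg h1, if_neg h2]
  have hfeas : feasm n m s := by
    refine ⟨by rw [hsk 0 (by omega) (by omega)]; exact hr0,
      by rw [hsk (n+1) (by omega) (by omega)]; exact hrn, ?_⟩
    intro k hk
    rcases eq_or_ne k (i-2) with rfl | hk2
    · rw [show i - 2 + 1 = i - 1 from by omega, hsi1, hsk (i-2) (by omega) (by omega)]
      omega
    · rcases eq_or_ne k (i-1) with rfl | hk1
      · rw [show i - 1 + 1 = i from by omega, hsi1, hsi]
        omega
      · rcases eq_or_ne k i with hki | hki
        · rw [hki, hsi, hsk (i+1) (by omega) (by omega)]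
          omega
        · rw [hsk k hk1 hki, hsk (k+1) (by omega) (by omega)]
          exact hrle k hk
  have hDle := hmax s hfeas
  have hDr := Dm_ext n m r hrn
  have hDs := Dm_ext n m s (by rw [hsk (n+1) (by omega) (by omega)]; exact hrn)
  rw [hDr, hDs] at hDle
  have hout : ∀ k ∈ Icc 1 (n+1), k ∉ ({i-1, i, i+1} : Finset ℕ) → Tm m s k = Tm m r k := by
    intro k hk hk'
    simp only [Finset.mem_Icc] at hk
    simp only [Finset.mem_insert, Finset.mem_singleton, not_or] at hk'
    unfold Tm
    rw [hsk k hk'.1 hk'.2.1, hsk (k-1) (by omega) (by omega)]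
  have hsub : ({i-1, i, i+1} : Finset ℕ) ⊆ Icc 1 (n+1) := by
    intro k hk
    simp only [Finset.mem_insert, Finset.mem_singleton] at hk
    simp only [Finset.mem_Icc]
    omega
  have hsplit : ∑ k ∈ Icc 1 (n+1), Tm m s k - ∑ k ∈ Icc 1 (n+1), Tm m r k
      = ∑ k ∈ ({i-1, i, i+1} : Finset ℕ), (Tm m s k - Tm m r k) := by
    rw [← Finset.sum_sub_distrib]
    exact (Finset.sum_subset hsub (by
      intro k hk hk'
      rw [hout k hk hk', sub_self])).symm
  rw [Finset.sum_insert (by simp; omega), Finset.sum_pair (by omega : i ≠ i + 1)] at hsplit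
  have hca : ((r (i-2)):ℤ) = r i := by omega
  have hcb : ((r (i-1)):ℤ) = (m:ℤ) - r i := by omega
  have hcs : ((m - (r i + 1) : ℕ) : ℤ) = (m:ℤ) - r i - 1 := by omega
  have hT1 : Tm m s (i-1) - Tm m r (i-1) = -(r i:ℤ) - 1 := by
    unfold Tm
    rw [show i - 1 - 1 = i - 2 from by omega, hsi1, hsk (i-2) (by omega) (by omega),
      hcs, hca, hcb]
    ring
  have hT2 : Tm m s i - Tm m r i = (m:ℤ) := by
    unfold Tm
    rw [show i - 1 = i - 1 from rfl, hsi, hsi1, hcs, hcb]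
    push_cast
    ring
  have hT3 : Tm m s (i+1) - Tm m r (i+1) = -(r (i+1):ℤ) := by
    unfold Tm
    rw [show i + 1 - 1 = i from by omega, hsk (i+1) (by omega) (by omega), hsi]
    push_cast
    ring
  rw [hT1, hT2, hT3] at hsplit
  -- from maximality, m - r i - r (i+1) - 1 ≤ 0, together with hb this forces equality
  have hb' : ((r i):ℤ) + r (i+1) + 1 ≤ m := by exact_mod_cast hb
  have hDeq : ∑ k ∈ Icc 1 (n+1), Tm m s k = ∑ k ∈ Icc 1 (n+1), Tm m r k := by
    linarith [hDle, hsplit, hb']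
  refine ⟨s, hfeas, ?_, ?_⟩
  · intro t ht
    calc Dm n m t ≤ Dm n m r := hmax t ht
      _ = Dm n m s := by
          rw [hDr, Dm_ext n m s (by rw [hsk (n+1) (by omega) (by omega)]; exact hrn)]
          exact hDeq.symm
  · rw [hsi1, hsk (i-2) (by omega) (by omega)]
    omega

lemma key (n m : ℕ) : ∀ i, Odd i → i ≤ n - 1 →
    ∀ r : ℕ → ℕ, feasm n m r →
    (∀ s, feasm n m s → Dm n m s ≤ Dm n m r) →
    r i + r (i+1) + 1 ≤ m → False := by
  intro i
  induction i using Nat.strong_induction_on with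
  | _ i ih =>
    intro hodd hin r hfeas hmax hb
    obtain ⟨hr0, hrn, hrle⟩ := hfeas
    obtain ⟨t, ht⟩ := hodd
    have hi1 : 1 ≤ i := by omega
    have hin' : i + 1 ≤ n := by omega
    have heq1 : r (i-1) + r i = m := by
      have hle := hrle (i-1) (by omega)
      rw [show i - 1 + 1 = i from by omega] at hle
      by_contra h
      exact move1 n m r hr0 hrn hrle hmax i hi1 (by omega) (by omega) hb
    rcases eq_or_ne i 1 with rfl | hne1
    · have h0 : r 0 + r 1 = m := by simpa using heq1
      omega
    · have hi3 : 3 ≤ i := by omega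
      have hodd2 : Odd (i-2) := ⟨t-1, by omega⟩
      have heq2 : r (i-2) + r (i-1) = m := by
        have hle := hrle (i-2) (by omega)
        rw [show i - 2 + 1 = i - 1 from by omega] at hle
        by_contra h
        exact ih (i-2) (by omega) hodd2 (by omega) r ⟨hr0, hrn, hrle⟩ hmax
          (by rw [show i - 2 + 1 = i - 1 from by omega]; omega)
      obtain ⟨s, hsfeas, hsmax, hsb⟩ :=
        move2 n m r hr0 hrn hrle hmax i hi3 hin' heq1 heq2 hb
      exact ih (i-2) (by omega) hodd2 (by omega) s hsfeas hsmax
        (by rw [show i - 2 + 1 = i - 1 from by omega]; exact hsb)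

end Stmt15aux

/-- For `n` even and `m > 0`, every maximizer of `Dm` over the feasible region
satisfies `r i + r (i+1) = m` for every odd `i ≤ n - 1`; consequently
`∑ r i = n m / 2`, the odd Betti numbers `β_i = m - r_i - r_{i+1}` vanish, and
`∑_{i=0}^n β_i = m`. -/
theorem stmt15 (n m : ℕ) (hn : Even n) (hm : 0 < m) :
    ∀ r : ℕ → ℕ, feasm n m r →
      (∀ s : ℕ → ℕ, feasm n m s → Dm n m s ≤ Dm n m r) →
      (∀ i, Odd i → i ≤ n - 1 → r i + r (i + 1) = m) ∧
      (∑ i ∈ Icc 1 n, (r i : ℤ)) = (n : ℤ) * m / 2 ∧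
      (∀ i, Odd i → i ≤ n - 1 → (m : ℤ) - r i - r (i + 1) = 0) ∧
      (∑ i ∈ range (n + 1), ((m : ℤ) - r i - r (i + 1))) = m := by
  intro r hfeas hmax
  obtain ⟨hr0, hrn, hrle⟩ := hfeas
  have hpair : ∀ i, Odd i → i ≤ n - 1 → r i + r (i + 1) = m := by
    intro i hodd hin
    obtain ⟨t, ht⟩ := hodd
    have hle := hrle i (by omega)
    by_contra h
    exact Stmt15aux.key n m i ⟨t, ht⟩ hin r ⟨hr0, hrn, hrle⟩ hmax (by omega)
  obtain ⟨k, hk⟩ := hn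
  have hsum : ∀ j, j ≤ k → ∑ i ∈ Icc 1 (2*j), (r i : ℤ) = (j:ℤ) * m := by
    intro j
    induction j with
    | zero => simp
    | succ j ihj =>
      intro hj
      have e2 : 2 * (j+1) = (2*j + 1) + 1 := by ring
      rw [e2, Finset.sum_Icc_succ_top (by omega), Finset.sum_Icc_succ_top (by omega),
        ihj (by omega)]
      have hp := hpair (2*j+1) ⟨j, by ring⟩ (by omega)
      have hp' : ((r (2*j+1) : ℤ)) + r (2*j+1+1) = m := by exact_mod_cast hp
      push_cast
      linarith [hp']
  have hS : ∑ i ∈ Icc 1 n, (r i : ℤ) = (k:ℤ) * m := by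
    have := hsum k le_rfl
    rw [show 2*k = n from by omega] at this
    exact this
  have hkz : (n:ℤ) = (k:ℤ) + k := by exact_mod_cast hk
  refine ⟨hpair, ?_, ?_, ?_⟩
  · rw [hS, hkz, show ((k:ℤ)+k)*m = 2*((k:ℤ)*m) from by ring,
      Int.mul_ediv_cancel_left _ two_ne_zero]
  · intro i hodd hin
    have := hpair i hodd hin
    omega
  · have e1 : ∑ i ∈ range (n+1), (r i : ℤ) = ∑ i ∈ Icc 1 n, (r i : ℤ) := by
      rw [Finset.sum_range_succ' (fun i => (r i : ℤ)) n,
        ← Stmt15aux.sum_shift (fun i => (r i:ℤ)) n, hr0]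
      simp
    have e2 : ∑ i ∈ range (n+1), (r (i+1) : ℤ) = ∑ i ∈ Icc 1 n, (r i : ℤ) := by
      rw [← Stmt15aux.sum_shift (fun i => (r (i):ℤ)) (n+1),
        Finset.sum_Icc_succ_top (by omega : 1 ≤ n + 1), hrn]
      simp
    rw [Finset.sum_sub_distrib, Finset.sum_sub_distrib, Finset.sum_const, Finset.card_range,
      e1, e2, hS, nsmul_eq_mul]
    push_cast
    rw [hkz]
    ring
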